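/- For all φ ∈ (0, π), B_c(φ)·cos(ψ_c(φ)) − B_s(φ)·sin(ψ_s(φ)) > 0, i.e. the real part of α₂(φ) exceeds the imaginary part of (1−α₂(φ)²)^{1/2}; equivalently B_c(φ) > B_s(φ) and cos(ψ_c(φ)) > sin(ψ_s(φ)). -/

import Mathlib

open Real Set

noncomputable def α₂ (φ : ℝ) : ℂ :=
  1 + ((Real.cos φ : ℂ) - 1) * Complex.exp (2 * Real.pi * Complex.I / 3)

noncomputable def Bc (φ : ℝ) : ℝ := ‖α₂ φ‖

noncomputable def ψc (φ : ℝ) : ℝ := (α₂ φ).arg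

noncomputable def Bs (φ : ℝ) : ℝ :=
  ((1 - Real.cos φ) ^ 2 * (7 - 4 * Real.cos φ + Real.cos φ ^ 2)) ^ ((1 : ℝ) / 4)

noncomputable def ψs (φ : ℝ) : ℝ :=
  π / 2 + Real.arctan (Real.sqrt 3 * (3 - Real.cos φ) / (-1 - Real.cos φ)) / 2

set_option maxHeartbeats 1000000 in
theorem Bc_cos_sub_Bs_sin_pos :
    ∀ φ ∈ Ioo (0 : ℝ) π,
      0 < Bc φ * Real.cos (ψc φ) - Bs φ * Real.sin (ψs φ) ∧
        Bs φ < Bc φ ∧ Real.sin (ψs φ) < Real.cos (ψc φ) := by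
  rintro φ ⟨hφ0, hφπ⟩
  set c := Real.cos φ with hcdef
  have hc1 : -1 < c := by
    have := Real.cos_lt_cos_of_nonneg_of_le_pi hφ0.le le_rfl hφπ
    simpa using this
  have hc2 : c < 1 := by
    have := Real.cos_lt_cos_of_nonneg_of_le_pi le_rfl hφπ.le hφ0
    simpa using this
  -- value of exp(2πi/3)
  have hcos23 : Real.cos (2 * π / 3) = -(1 / 2) := by
    rw [show 2 * π / 3 = π - π / 3 by ring, Real.cos_pi_sub, Real.cos_pi_div_three]
  have hsin23 : Real.sin (2 * π / 3) = Real.sqrt 3 / 2 := by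
    rw [show 2 * π / 3 = π - π / 3 by ring, Real.sin_pi_sub, Real.sin_pi_div_three]
  have hexp : Complex.exp (2 * Real.pi * Complex.I / 3)
      = Complex.mk (-(1 / 2)) (Real.sqrt 3 / 2) := by
    have h1 : (2 * (Real.pi : ℂ) * Complex.I / 3) = ((2 * Real.pi / 3 : ℝ) : ℂ) * Complex.I := by
      push_cast; ring
    rw [h1, Complex.exp_mul_I, ← Complex.ofReal_cos, ← Complex.ofReal_sin, hcos23, hsin23]
    apply Complex.ext <;> simp
  have hre : (α₂ φ).re = (3 - c) / 2 := by
    simp [α₂, hexp, Complex.add_re, Complex.mul_re, ← hcdef]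
    ring
  have him : (α₂ φ).im = Real.sqrt 3 * (c - 1) / 2 := by
    simp [α₂, hexp, Complex.add_im, Complex.mul_im, ← hcdef]
    ring
  have hQ : (0:ℝ) < 7 - 4 * c + c ^ 2 := by nlinarith
  have hS : (0:ℝ) < 3 - 3 * c + c ^ 2 := by nlinarith
  have h3 : Real.sqrt 3 ^ 2 = 3 := Real.sq_sqrt (by norm_num)
  have hBc2 : Bc φ ^ 2 = 3 - 3 * c + c ^ 2 := by
    rw [Bc, Complex.sq_norm, Complex.normSq_apply, hre, him]
    have h3' : Real.sqrt 3 * Real.sqrt 3 = 3 := Real.mul_self_sqrt (by norm_num)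
    linear_combination ((c - 1) ^ 2 / 4) * h3'
  have hzne : α₂ φ ≠ 0 := by
    intro h
    rw [h] at hre
    simp at hre
    linarith
  have hBcpos : 0 < Bc φ := norm_pos_iff.mpr hzne
  have hcosψc : Real.cos (ψc φ) = (3 - c) / (2 * Bc φ) := by
    rw [ψc, Complex.cos_arg hzne, hre, show ‖α₂ φ‖ = Bc φ from rfl, div_div]
  have hBccos : Bc φ * Real.cos (ψc φ) = (3 - c) / 2 := by
    rw [hcosψc]; field_simp
  have hcospos : 0 < Real.cos (ψc φ) := by
    rw [hcosψc]
    apply div_pos (by linarith) (by positivity)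
  -- Bs
  have hX : (0:ℝ) ≤ (1 - c) ^ 2 * (7 - 4 * c + c ^ 2) := mul_nonneg (sq_nonneg _) hQ.le
  have hBs4 : Bs φ ^ 4 = (1 - c) ^ 2 * (7 - 4 * c + c ^ 2) := by
    rw [Bs, ← hcdef, ← Real.rpow_natCast (((1 - c) ^ 2 * (7 - 4 * c + c ^ 2)) ^ ((1:ℝ)/4)) 4,
      ← Real.rpow_mul hX]
    norm_num
  have hBsnn : 0 ≤ Bs φ := Real.rpow_nonneg hX _
  have hBc4 : Bc φ ^ 4 = (3 - 3 * c + c ^ 2) ^ 2 := by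
    rw [show (4:ℕ) = 2 * 2 from rfl, pow_mul, hBc2]
  have hBsBc : Bs φ < Bc φ := by
    apply lt_of_pow_lt_pow_left₀ 4 hBcpos.le
    rw [hBs4, hBc4]
    have hcc : c ^ 2 < 1 := by nlinarith
    have hfact : (3 - 3 * c + c ^ 2) ^ 2 - (1 - c) ^ 2 * (7 - 4 * c + c ^ 2) = 2 - c ^ 2 := by
      ring
    linarith
  -- ψs
  set t := Real.sqrt 3 * (3 - c) / (-1 - c) with htdef
  have hsinψs : Real.sin (ψs φ) = Real.cos (Real.arctan t / 2) := by
    rw [ψs, ← hcdef, ← htdef, Real.sin_add]; simp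
  have hsinpos : 0 < Real.sin (ψs φ) := by
    rw [hsinψs]
    apply Real.cos_pos_of_mem_Ioo
    constructor
    · linarith [Real.neg_pi_div_two_lt_arctan t, Real.pi_pos]
    · linarith [Real.arctan_lt_pi_div_two t, Real.pi_pos]
  have h1c : (0:ℝ) < 1 + c := by linarith
  have hne : (-1 - c : ℝ) ≠ 0 := by linarith
  have ht2 : 1 + t ^ 2 = 4 * (7 - 4 * c + c ^ 2) / (1 + c) ^ 2 := by
    rw [htdef]
    field_simp
    linear_combination ((3 - c) ^ 2 * (1 + c) ^ 2) * h3
  set q := Real.sqrt (7 - 4 * c + c ^ 2) with hqdef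
  have hq2 : q ^ 2 = 7 - 4 * c + c ^ 2 := Real.sq_sqrt hQ.le
  have hqpos : 0 < q := Real.sqrt_pos.mpr hQ
  have h2q : (2 * q / (1 + c)) ^ 2 = 1 + t ^ 2 := by
    rw [ht2, div_pow, mul_pow, hq2]; norm_num
  have hsqrt1t : Real.sqrt (1 + t ^ 2) = 2 * q / (1 + c) := by
    rw [← h2q, Real.sqrt_sq (by positivity)]
  have hcosarctan : Real.cos (Real.arctan t) = (1 + c) / (2 * q) := by
    rw [Real.cos_arctan, hsqrt1t, one_div_div]
  have hsin2 : Real.sin (ψs φ) ^ 2 = 1 / 2 + (1 + c) / (4 * q) := by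
    rw [hsinψs, Real.cos_sq, show 2 * (Real.arctan t / 2) = Real.arctan t by ring, hcosarctan]
    field_simp
    ring
  have h2c : (0:ℝ) < 2 - c ^ 2 := by nlinarith
  have h3c2 : (0:ℝ) < 3 - c ^ 2 := by nlinarith
  have hkey : (1 + c) * (3 - 3 * c + c ^ 2) < q * (3 - c ^ 2) := by
    apply lt_of_pow_lt_pow_left₀ 2 (by positivity)
    rw [mul_pow, mul_pow, hq2]
    have hP : (0:ℝ) < (3 - c) ^ 2 * (2 - c ^ 2) :=
      mul_pos (pow_pos (by linarith) 2) h2c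
    have hfact : (7 - 4 * c + c ^ 2) * (3 - c ^ 2) ^ 2
        - ((1 + c) * (3 - 3 * c + c ^ 2)) ^ 2 = 3 * ((3 - c) ^ 2 * (2 - c ^ 2)) := by
      ring
    linarith
  have hcos2 : Real.cos (ψc φ) ^ 2 = (3 - c) ^ 2 / (4 * (3 - 3 * c + c ^ 2)) := by
    rw [hcosψc, div_pow, mul_pow, hBc2]; norm_num
  have hlt2 : Real.sin (ψs φ) ^ 2 < Real.cos (ψc φ) ^ 2 := by
    rw [hsin2, hcos2, ← sub_pos]
    have hSne : (3 - 3 * c + c ^ 2) ≠ 0 := hS.ne'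
    have hexpand : (3 - c) ^ 2 / (4 * (3 - 3 * c + c ^ 2)) - (1 / 2 + (1 + c) / (4 * q))
        = (q * (3 - c ^ 2) - (1 + c) * (3 - 3 * c + c ^ 2)) / (4 * (3 - 3 * c + c ^ 2) * q) := by
      have h4S : (4 * (3 - 3 * c + c ^ 2)) ≠ 0 := (mul_pos (by norm_num) hS).ne'
      have h4q : (4 * q) ≠ 0 := (mul_pos (by norm_num) hqpos).ne'
      rw [div_add_div _ _ two_ne_zero h4q, div_sub_div _ _ h4S (mul_ne_zero two_ne_zero h4q),
        div_eq_div_iff (mul_ne_zero h4S (mul_ne_zero two_ne_zero h4q))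
          (mul_pos (mul_pos (by norm_num) hS) hqpos).ne']
      ring
    rw [hexpand]
    apply div_pos (by linarith) (by positivity)
  have hsincos : Real.sin (ψs φ) < Real.cos (ψc φ) :=
    lt_of_pow_lt_pow_left₀ 2 hcospos.le hlt2
  refine ⟨?_, hBsBc, hsincos⟩
  have hmul : Bs φ * Real.sin (ψs φ) < Bc φ * Real.cos (ψc φ) :=
    mul_lt_mul'' hBsBc hsincos hBsnn hsinpos.le
  linarith
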